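/- For any complex s not an eigenvalue of A_L nor of Â_L = Π† A_L Π, the transfer-matrix identity g_{u_e}(s) − ĝ_{u_e}(s) = H(s) g_{u_e}(s) holds, where g_{u_e}(s) = (sI_N − A_L)^{-1} B, ĝ_{u_e}(s) = Π(sI_r − Â_L)^{-1} Π† B, and H(s) = [Π(sI_r − Â_L)^{-1} Π† A_L + I_N](I_N − Π Π†). -/
import Mathlib


open Matrix

lemma aux_stmt10 {n r p : Type*} [Fintype n] [Fintype r] [DecidableEq n] [DecidableEq r]
    (A G S : Matrix n n ℂ) (Pm : Matrix n r ℂ) (Dm : Matrix r n ℂ)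
    (Gh Sh Ah : Matrix r r ℂ) (Bm : Matrix n p ℂ)
    (e1 : A * G = S * G - 1) (e2 : Gh * Ah = Gh * Sh - 1)
    (e3 : Dm * S = Sh * Dm) (e4 : Dm * A * Pm = Ah) :
    G * Bm - Pm * Gh * Dm * Bm = ((Pm * Gh * Dm * A + 1) * (1 - Pm * Dm)) * (G * Bm) := by
  have key : ((Pm * Gh * Dm * A + 1) * (1 - Pm * Dm)) * G = G - Pm * Gh * Dm := by
    calc ((Pm * Gh * Dm * A + 1) * (1 - Pm * Dm)) * G
        = Pm * Gh * (Dm * (A * G)) + G - Pm * (Gh * (Dm * A * Pm)) * (Dm * G)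
            - Pm * (Dm * G) := by
          simp only [Matrix.add_mul, Matrix.mul_add, Matrix.sub_mul, Matrix.mul_sub,
            Matrix.one_mul, Matrix.mul_one, Matrix.mul_assoc]
          abel
      _ = Pm * Gh * (Dm * (S * G - 1)) + G - Pm * (Gh * Sh - 1) * (Dm * G)
            - Pm * (Dm * G) := by rw [e1, e4, e2]
      _ = Pm * Gh * ((Dm * S) * G) - Pm * Gh * Dm + G
            - Pm * (Gh * Sh) * (Dm * G) := by
          simp only [Matrix.mul_sub, Matrix.sub_mul, Matrix.one_mul, Matrix.mul_one,
            Matrix.mul_assoc]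
          abel
      _ = Pm * Gh * ((Sh * Dm) * G) - Pm * Gh * Dm + G
            - Pm * (Gh * Sh) * (Dm * G) := by rw [e3]
      _ = G - Pm * Gh * Dm := by
          simp only [Matrix.mul_assoc]
          abel
  rw [← Matrix.mul_assoc, key, Matrix.sub_mul, Matrix.mul_assoc]

theorem stmt_10 (N r p : ℕ)
    (AL : Matrix (Fin N) (Fin N) ℝ) (B : Matrix (Fin N) (Fin p) ℝ)
    (Pi : Matrix (Fin N) (Fin r) ℝ) (PiD : Matrix (Fin r) (Fin N) ℝ)
    (hleft : PiD * Pi = 1)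
    (ALhat : Matrix (Fin r) (Fin r) ℝ) (hALhat : ALhat = PiD * AL * Pi)
    (s : ℂ)
    (hs : IsUnit (s • (1 : Matrix (Fin N) (Fin N) ℂ) - AL.map (fun t => (t : ℂ))))
    (hshat : IsUnit (s • (1 : Matrix (Fin r) (Fin r) ℂ) - ALhat.map (fun t => (t : ℂ)))) :
    (s • (1 : Matrix (Fin N) (Fin N) ℂ) - AL.map (fun t => (t : ℂ)))⁻¹ * B.map (fun t => (t : ℂ))
      - Pi.map (fun t => (t : ℂ)) *
        (s • (1 : Matrix (Fin r) (Fin r) ℂ) - ALhat.map (fun t => (t : ℂ)))⁻¹ *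
        PiD.map (fun t => (t : ℂ)) * B.map (fun t => (t : ℂ)) =
    ((Pi.map (fun t => (t : ℂ)) *
        (s • (1 : Matrix (Fin r) (Fin r) ℂ) - ALhat.map (fun t => (t : ℂ)))⁻¹ *
        PiD.map (fun t => (t : ℂ)) * AL.map (fun t => (t : ℂ)) + 1) *
      (1 - Pi.map (fun t => (t : ℂ)) * PiD.map (fun t => (t : ℂ)))) *
      ((s • (1 : Matrix (Fin N) (Fin N) ℂ) - AL.map (fun t => (t : ℂ)))⁻¹ *
        B.map (fun t => (t : ℂ))) := by
  have hmap : ∀ {m n k : ℕ} (X : Matrix (Fin m) (Fin n) ℝ) (Y : Matrix (Fin n) (Fin k) ℝ),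
      (X * Y).map (fun t => (t : ℂ)) = X.map (fun t => (t : ℂ)) * Y.map (fun t => (t : ℂ)) := by
    intro m n k X Y
    exact Matrix.map_mul (f := Complex.ofRealHom)
  have h1 : (s • (1 : Matrix (Fin N) (Fin N) ℂ) - AL.map (fun t => (t : ℂ))) *
      (s • (1 : Matrix (Fin N) (Fin N) ℂ) - AL.map (fun t => (t : ℂ)))⁻¹ = 1 :=
    Matrix.mul_nonsing_inv _ ((Matrix.isUnit_iff_isUnit_det _).mp hs)
  have h4 : (s • (1 : Matrix (Fin r) (Fin r) ℂ) - ALhat.map (fun t => (t : ℂ)))⁻¹ *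
      (s • (1 : Matrix (Fin r) (Fin r) ℂ) - ALhat.map (fun t => (t : ℂ))) = 1 :=
    Matrix.nonsing_inv_mul _ ((Matrix.isUnit_iff_isUnit_det _).mp hshat)
  refine aux_stmt10 _ _ (s • (1 : Matrix (Fin N) (Fin N) ℂ)) _ _ _
      (s • (1 : Matrix (Fin r) (Fin r) ℂ)) (ALhat.map (fun t => (t : ℂ))) _ ?_ ?_ ?_ ?_
  · rw [Matrix.sub_mul] at h1
    linear_combination (norm := abel) -h1
  · rw [Matrix.mul_sub] at h4
    linear_combination (norm := abel) -h4
  · rw [Matrix.mul_smul, Matrix.smul_mul, Matrix.mul_one, Matrix.one_mul]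
  · rw [hALhat, hmap, hmap]
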